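/- arXiv:1005.2474 — 2 statements merged into one kernel-verified Lean document; each statement's English description precedes it below -/
import Mathlib

section
/- Let ρ : [0,∞) → [0,∞) be an Osgood modulus, let T > 0, let β : [0,T] → [0,∞) be Lebesgue integrable, and let X : [0,T] → [0,∞) be a bounded measurable function satisfying X(t) ≤ ∫_t^T β(s) ρ(X(s)) ds for every t ∈ [0,T]. Then X(t) = 0 for every t ∈ [0,T]. -/
open MeasureTheory Set

/-- An Osgood modulus: `ρ : [0,∞) → [0,∞)` continuous, nondecreasing, concave,
`ρ(0) = 0`, `ρ(u) > 0` for `u > 0`, and `∫₀¹ du/ρ(u) = +∞`. -/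
def IsOsgoodModulus (ρ : ℝ → ℝ) : Prop :=
  ContinuousOn ρ (Ici 0) ∧ MonotoneOn ρ (Ici 0) ∧ ConcaveOn ℝ (Ici 0) ρ ∧
  ρ 0 = 0 ∧ (∀ u : ℝ, 0 < u → 0 < ρ u) ∧
  ∫⁻ u in Ioc (0:ℝ) 1, ENNReal.ofReal (1 / ρ u) = ⊤

open scoped ENNReal NNReal


lemma dyadic_union (c : ℝ) (hc : 0 < c) :
    (⋃ n : ℕ, Ioc (c / 2 ^ (n + 1)) (c / 2 ^ n)) = Ioc (0:ℝ) c := by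
  ext u
  simp only [mem_iUnion, mem_Ioc]
  constructor
  · rintro ⟨n, h1, h2⟩
    refine ⟨lt_trans (by positivity) h1, h2.trans ?_⟩
    have h2n : (1:ℝ) ≤ 2 ^ n := by exact_mod_cast Nat.one_le_two_pow
    exact div_le_self hc.le h2n
  · rintro ⟨hu, huc⟩
    have hex : ∃ n : ℕ, c / 2 ^ (n + 1) < u := by
      obtain ⟨n, hn⟩ := pow_unbounded_of_one_lt (c / u) (by norm_num : (1:ℝ) < 2)
      refine ⟨n, ?_⟩
      rw [div_lt_iff₀ (by positivity)]
      have h1 : c / u < 2 ^ (n + 1) :=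
        hn.trans_le (pow_le_pow_right₀ (by norm_num) (Nat.le_succ n))
      have h2 : c = (c / u) * u := by field_simp
      nlinarith [pow_pos (by norm_num : (0:ℝ) < 2) (n+1)]
    classical
    refine ⟨Nat.find hex, Nat.find_spec hex, ?_⟩
    rcases Nat.eq_zero_or_pos (Nat.find hex) with h0 | hpos
    · rw [h0]; simpa using huc
    · obtain ⟨k, hk⟩ := Nat.exists_eq_succ_of_ne_zero hpos.ne'
      have := Nat.find_min hex (by omega : k < Nat.find hex)
      rw [hk]
      exact le_of_not_gt this

lemma osgood_sum_bound (ρ : ℝ → ℝ) (hmono : MonotoneOn ρ (Ici 0))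
    (hpos : ∀ u : ℝ, 0 < u → 0 < ρ u)
    (hint : ∫⁻ u in Ioc (0:ℝ) 1, ENNReal.ofReal (1 / ρ u) = ⊤)
    (c : ℝ) (hc : 0 < c) (C : ℝ)
    (hsum : ∀ n : ℕ, ∑ k ∈ Finset.range n, c / 2 ^ (k + 1) / ρ (c / 2 ^ k) ≤ C) :
    False := by
  set a : ℕ → ℝ := fun k => c / 2 ^ (k + 1) / ρ (c / 2 ^ k) with ha
  have hdpos : ∀ k : ℕ, (0:ℝ) < c / 2 ^ k := fun k => by positivity
  have hρd : ∀ k : ℕ, 0 < ρ (c / 2 ^ k) := fun k => hpos _ (hdpos k)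
  have hanonneg : ∀ k, 0 ≤ a k := fun k => div_nonneg (hdpos (k+1)).le (hρd k).le
  -- Step 1: ∫⁻ over Ioc 0 c is ⊤
  have hIc : ∫⁻ u in Ioc (0:ℝ) c, ENNReal.ofReal (1 / ρ u) = ⊤ := by
    rcases le_or_gt 1 c with h1 | h1
    · refine eq_top_mono (lintegral_mono_set ?_) hint
      exact Ioc_subset_Ioc le_rfl h1
    · have hsplit : Ioc (0:ℝ) c ∪ Ioc c 1 = Ioc 0 1 :=
        Ioc_union_Ioc_eq_Ioc hc.le h1.le
      have hunion := lintegral_union (μ := volume) (f := fun u => ENNReal.ofReal (1 / ρ u))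
        (A := Ioc (0:ℝ) c) (B := Ioc c 1) measurableSet_Ioc (Ioc_disjoint_Ioc_of_le le_rfl)
      rw [hsplit, hint] at hunion
      have htail : ∫⁻ u in Ioc c 1, ENNReal.ofReal (1 / ρ u) ≠ ⊤ := by
        have hb : ∫⁻ u in Ioc c 1, ENNReal.ofReal (1 / ρ u)
            ≤ ENNReal.ofReal (1 / ρ c) * volume (Ioc c 1) := by
          rw [← setLIntegral_const]
          refine setLIntegral_mono measurable_const fun u hu => ?_
          apply ENNReal.ofReal_le_ofReal
          exact one_div_le_one_div_of_le (hpos c hc)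
            (hmono hc.le (hc.trans hu.1).le hu.1.le)
        exact ne_top_of_le_ne_top (ENNReal.mul_ne_top ENNReal.ofReal_ne_top measure_Ioc_lt_top.ne) hb
      by_contra hne
      exact htail ((ENNReal.add_eq_top.mp hunion.symm).resolve_left hne)
  -- Step 2: decompose into dyadic pieces
  have hmeas : ∀ n : ℕ, MeasurableSet (Ioc (c / 2 ^ (n + 1)) (c / 2 ^ n)) :=
    fun n => measurableSet_Ioc
  have hdisj : Pairwise (Function.onFun Disjoint fun n : ℕ => Ioc (c / 2 ^ (n + 1)) (c / 2 ^ n)) := by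
    intro m n hmn
    wlog h : m < n generalizing m n
    · exact (this hmn.symm (by omega)).symm
    simp only [Function.onFun, Set.Ioc_disjoint_Ioc]
    refine inf_le_of_right_le (le_sup_of_le_left ?_)
    have h2 : (2:ℝ) ^ (m + 1) ≤ 2 ^ n := by
      apply pow_le_pow_right₀ (by norm_num) (by omega)
    exact div_le_div_of_nonneg_left hc.le (by positivity) h2
  have hdecomp : (⊤ : ℝ≥0∞)
      = ∑' n : ℕ, ∫⁻ u in Ioc (c / 2 ^ (n + 1)) (c / 2 ^ n), ENNReal.ofReal (1 / ρ u) := by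
    rw [← lintegral_iUnion hmeas hdisj, dyadic_union c hc, hIc]
  -- Step 3: bound each piece
  have hpiece : ∀ n : ℕ, ∫⁻ u in Ioc (c / 2 ^ (n + 1)) (c / 2 ^ n), ENNReal.ofReal (1 / ρ u)
      ≤ ENNReal.ofReal (2 * a (n + 1)) := by
    intro n
    have hd := hdpos (n+1)
    calc ∫⁻ u in Ioc (c / 2 ^ (n + 1)) (c / 2 ^ n), ENNReal.ofReal (1 / ρ u)
        ≤ ∫⁻ _ in Ioc (c / 2 ^ (n + 1)) (c / 2 ^ n),
            ENNReal.ofReal (1 / ρ (c / 2 ^ (n + 1))) := by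
          refine setLIntegral_mono measurable_const fun u hu => ?_
          exact ENNReal.ofReal_le_ofReal (one_div_le_one_div_of_le (hρd (n+1))
            (hmono hd.le (hd.trans hu.1).le hu.1.le))
      _ = ENNReal.ofReal (1 / ρ (c / 2 ^ (n + 1))) * volume (Ioc (c / 2 ^ (n + 1)) (c / 2 ^ n)) :=
          setLIntegral_const _ _
      _ = ENNReal.ofReal (2 * a (n + 1)) := by
          rw [Real.volume_Ioc]
          have he : c / 2 ^ n - c / 2 ^ (n + 1) = c / 2 ^ (n + 1) := by ring
          rw [he, ← ENNReal.ofReal_mul (one_div_nonneg.mpr (hρd (n+1)).le)]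
          congr 1
          have hne := (hρd (n+1)).ne'
          simp only [ha]
          field_simp
          ring
  -- Step 4: the dyadic sum is finite, contradiction
  have hsum' : ∑' n : ℕ, ENNReal.ofReal (a n) ≤ ENNReal.ofReal C := by
    refine Summable.tsum_le_of_sum_le ENNReal.summable fun s => ?_
    obtain ⟨N, hN⟩ := s.exists_nat_subset_range
    calc ∑ k ∈ s, ENNReal.ofReal (a k)
        ≤ ∑ k ∈ Finset.range N, ENNReal.ofReal (a k) :=
          Finset.sum_le_sum_of_subset hN
      _ = ENNReal.ofReal (∑ k ∈ Finset.range N, a k) :=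
          (ENNReal.ofReal_sum_of_nonneg fun k _ => hanonneg k).symm
      _ ≤ ENNReal.ofReal C := ENNReal.ofReal_le_ofReal (hsum N)
  have hfin : (⊤ : ℝ≥0∞) ≤ 2 * ENNReal.ofReal C := by
    calc (⊤ : ℝ≥0∞) = ∑' n : ℕ, ∫⁻ u in Ioc (c / 2 ^ (n + 1)) (c / 2 ^ n),
          ENNReal.ofReal (1 / ρ u) := hdecomp
      _ ≤ ∑' n : ℕ, ENNReal.ofReal (2 * a (n + 1)) := ENNReal.tsum_le_tsum hpiece
      _ = 2 * ∑' n : ℕ, ENNReal.ofReal (a (n + 1)) := by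
          simp_rw [ENNReal.ofReal_mul (by norm_num : (0:ℝ) ≤ 2)]
          rw [ENNReal.tsum_mul_left]
          norm_num
      _ ≤ 2 * ∑' n : ℕ, ENNReal.ofReal (a n) :=
          mul_le_mul_right (ENNReal.tsum_comp_le_tsum_of_injective Nat.succ_injective
            (fun n => ENNReal.ofReal (a n))) 2
      _ ≤ 2 * ENNReal.ofReal C := by gcongr
  have : (2 : ℝ≥0∞) * ENNReal.ofReal C ≠ ⊤ :=
    ENNReal.mul_ne_top (by norm_num) ENNReal.ofReal_ne_top
  exact this (top_le_iff.mp hfin)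

/-- Backward Bihari–LaSalle inequality with an Osgood modulus forces the
function to vanish. -/
theorem backward_bihari_osgood
    (ρ : ℝ → ℝ) (hρ : IsOsgoodModulus ρ)
    (T : ℝ) (hT : 0 < T)
    (β : ℝ → ℝ) (hβint : IntegrableOn β (Icc 0 T))
    (hβnonneg : ∀ t ∈ Icc (0:ℝ) T, 0 ≤ β t)
    (X : ℝ → ℝ) (hXmeas : Measurable X)
    (B : ℝ) (hXbdd : ∀ t ∈ Icc (0:ℝ) T, X t ∈ Icc 0 B)
    (hX : ∀ t ∈ Icc (0:ℝ) T, X t ≤ ∫ s in t..T, β s * ρ (X s)) :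
    ∀ t ∈ Icc (0:ℝ) T, X t = 0 := by
  obtain ⟨hρc, hρmono, _hρconc, hρ0, hρpos, hρint⟩ := hρ
  have hXnn : ∀ s ∈ Icc (0:ℝ) T, 0 ≤ X s := fun s hs => (hXbdd s hs).1
  have hXB : ∀ s ∈ Icc (0:ℝ) T, X s ≤ B := fun s hs => (hXbdd s hs).2
  have hB : (0:ℝ) ≤ B := le_trans (hXnn 0 ⟨le_rfl, hT.le⟩) (hXB 0 ⟨le_rfl, hT.le⟩)
  have hρX_nn : ∀ s ∈ Icc (0:ℝ) T, 0 ≤ ρ (X s) := fun s hs => by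
    rw [← hρ0]; exact hρmono self_mem_Ici (hXnn s hs) (hXnn s hs)
  set g : ℝ → ℝ := fun s => β s * ρ (X s) with hgdef
  have hgnn : ∀ s ∈ Icc (0:ℝ) T, 0 ≤ g s := fun s hs =>
    mul_nonneg (hβnonneg s hs) (hρX_nn s hs)
  -- integrability of g
  have hgint : IntegrableOn g (Icc 0 T) := by
    set ρ' : ℝ → ℝ := fun u => ρ (max u 0) with hρ'def
    have hρ'cont : Continuous ρ' :=
      hρc.comp_continuous (continuous_id.max continuous_const) fun x => mem_Ici.mpr (le_max_right _ _)
    have h1 : IntegrableOn (fun s => β s * ρ' (X s)) (Icc 0 T) := by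
      refine Integrable.mono' ((hβint.abs.const_mul (ρ B)))
        (hβint.aestronglyMeasurable.mul
          ((hρ'cont.measurable.comp hXmeas).aestronglyMeasurable)) ?_
      rw [ae_restrict_iff' measurableSet_Icc]
      refine Filter.Eventually.of_forall fun s hs => ?_
      have hmax : max (X s) 0 = X s := max_eq_left (hXnn s hs)
      have hρ'nn : 0 ≤ ρ' (X s) := by
        simp only [hρ'def, hmax]; exact hρX_nn s hs
      have hρ'B : ρ' (X s) ≤ ρ B := by
        simp only [hρ'def, hmax]
        exact hρmono (hXnn s hs) hB (hXB s hs)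
      rw [Real.norm_eq_abs, abs_mul, abs_of_nonneg hρ'nn]
      calc |β s| * ρ' (X s) ≤ |β s| * ρ B := by
            exact mul_le_mul_of_nonneg_left hρ'B (abs_nonneg _)
        _ = ρ B * |β s| := mul_comm _ _
    refine h1.congr_fun (fun s hs => ?_) measurableSet_Icc
    simp only [hρ'def, max_eq_left (hXnn s hs), hgdef]
  have hgii : ∀ a b : ℝ, 0 ≤ a → a ≤ b → b ≤ T → IntervalIntegrable g volume a b := by
    intro a b ha hab hbT
    exact (hgint.mono_set (by rw [uIcc_of_le hab]; exact Icc_subset_Icc ha hbT)).intervalIntegrable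
  have hβii : ∀ a b : ℝ, 0 ≤ a → a ≤ b → b ≤ T → IntervalIntegrable β volume a b := by
    intro a b ha hab hbT
    exact (hβint.mono_set (by rw [uIcc_of_le hab]; exact Icc_subset_Icc ha hbT)).intervalIntegrable
  set F : ℝ → ℝ := fun t => ∫ s in t..T, g s with hFdef
  have hFdiff : ∀ a b : ℝ, 0 ≤ a → a ≤ b → b ≤ T → F a - F b = ∫ s in a..b, g s := by
    intro a b ha hab hbT
    have := intervalIntegral.integral_add_adjacent_intervals
      (hgii a b ha hab hbT) (hgii b T (ha.trans hab) hbT le_rfl)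
    simp only [hFdef]; linarith
  have hFanti : ∀ a b : ℝ, 0 ≤ a → a ≤ b → b ≤ T → F b ≤ F a := by
    intro a b ha hab hbT
    have h1 := hFdiff a b ha hab hbT
    have h2 : 0 ≤ ∫ s in a..b, g s :=
      intervalIntegral.integral_nonneg hab fun u hu =>
        hgnn u ⟨ha.trans hu.1, hu.2.trans hbT⟩
    linarith
  have hFT : F T = 0 := intervalIntegral.integral_same
  have hXF : ∀ s ∈ Icc (0:ℝ) T, X s ≤ F s := hX
  have hFcont : ContinuousOn F (Icc 0 T) := by
    have h := intervalIntegral.continuousOn_primitive_interval_left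
      (f := g) (μ := volume) (a := 0) (b := T) (by rw [uIcc_of_le hT.le]; exact hgint)
    rwa [uIcc_of_le hT.le] at h
  -- main claim : F ≤ 0 on [0, T]
  suffices hF0 : ∀ t ∈ Icc (0:ℝ) T, F t ≤ 0 by
    intro s hs
    exact le_antisymm ((hXF s hs).trans (hF0 s hs)) (hXnn s hs)
  by_contra hcon
  push_neg at hcon
  obtain ⟨t₀, ht₀, hFt₀⟩ := hcon
  set c : ℝ := F t₀ with hcdef
  have hc : 0 < c := hFt₀
  -- construct the dyadic-time sequence
  have step : ∀ n : ℕ, ∀ x : ℝ, x ∈ Icc t₀ T → F x = c / 2 ^ n →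
      ∃ y : ℝ, (y ∈ Icc t₀ T ∧ F y = c / 2 ^ (n + 1)) ∧ x ≤ y := by
    intro n x hx hFx
    have hcont : ContinuousOn F (Icc x T) :=
      hFcont.mono (Icc_subset_Icc (ht₀.1.trans hx.1) le_rfl)
    have himg := intermediate_value_Icc' hx.2 hcont
    have hmem : c / 2 ^ (n + 1) ∈ Icc (F T) (F x) := by
      rw [hFT, hFx]
      constructor
      · positivity
      · have h2 : (2:ℝ) ^ n ≤ 2 ^ (n + 1) := by
          apply pow_le_pow_right₀ (by norm_num) (Nat.le_succ n)
        exact div_le_div_of_nonneg_left hc.le (by positivity) h2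
    obtain ⟨y, hy, hFy⟩ := himg hmem
    exact ⟨y, ⟨⟨hx.1.trans hy.1, hy.2⟩, hFy⟩, hy.1⟩
  choose next hnext hle using step
  let Q : ℕ → Type := fun n => {x : ℝ // x ∈ Icc t₀ T ∧ F x = c / 2 ^ n}
  let seq : ∀ n, Q n := fun n => Nat.rec
    (⟨t₀, ⟨le_rfl, ht₀.2⟩, by simp [hcdef]⟩ : Q 0)
    (fun n p => ⟨next n p.1 p.2.1 p.2.2, hnext n p.1 p.2.1 p.2.2⟩) n
  set t : ℕ → ℝ := fun n => (seq n).1 with htdef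
  have ht_mem : ∀ n, t n ∈ Icc t₀ T := fun n => (seq n).2.1
  have htF : ∀ n, F (t n) = c / 2 ^ n := fun n => (seq n).2.2
  have ht_succ : ∀ n, t n ≤ t (n + 1) := fun n => hle n (seq n).1 (seq n).2.1 (seq n).2.2
  have ht0 : t 0 = t₀ := rfl
  have ht_lb : ∀ n, (0:ℝ) ≤ t n := fun n => ht₀.1.trans (ht_mem n).1
  -- key inequality
  have claim1 : ∀ n : ℕ, c / 2 ^ (n + 1) ≤ ρ (c / 2 ^ n) * ∫ s in t n..t (n + 1), β s := by
    intro n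
    have ha := ht_mem n
    have hb := ht_mem (n + 1)
    have hab := ht_succ n
    have h0a : (0:ℝ) ≤ t n := ht_lb n
    have hdiff : F (t n) - F (t (n + 1)) = ∫ s in t n..t (n + 1), g s :=
      hFdiff _ _ h0a hab hb.2
    have hcn : (0:ℝ) < c / 2 ^ n := by positivity
    have hptwise : ∀ s ∈ Icc (t n) (t (n + 1)), g s ≤ ρ (c / 2 ^ n) * β s := by
      intro s hs
      have hsIcc : s ∈ Icc (0:ℝ) T := ⟨h0a.trans hs.1, hs.2.trans hb.2⟩
      have hXle : X s ≤ c / 2 ^ n := by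
        calc X s ≤ F s := hXF s hsIcc
          _ ≤ F (t n) := hFanti (t n) s h0a hs.1 hsIcc.2
          _ = c / 2 ^ n := htF n
      have hρle : ρ (X s) ≤ ρ (c / 2 ^ n) := hρmono (hXnn s hsIcc) hcn.le hXle
      calc g s = β s * ρ (X s) := rfl
        _ ≤ β s * ρ (c / 2 ^ n) := mul_le_mul_of_nonneg_left hρle (hβnonneg s hsIcc)
        _ = ρ (c / 2 ^ n) * β s := mul_comm _ _
    have hintle : (∫ s in t n..t (n + 1), g s) ≤ ∫ s in t n..t (n + 1), ρ (c / 2 ^ n) * β s :=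
      intervalIntegral.integral_mono_on hab (hgii _ _ h0a hab hb.2)
        ((hβii _ _ h0a hab hb.2).const_mul _) hptwise
    have hconst : (∫ s in t n..t (n + 1), ρ (c / 2 ^ n) * β s)
        = ρ (c / 2 ^ n) * ∫ s in t n..t (n + 1), β s :=
      intervalIntegral.integral_const_mul _ _
    have hlhs : F (t n) - F (t (n + 1)) = c / 2 ^ (n + 1) := by
      rw [htF n, htF (n + 1)]; ring
    linarith [hlhs ▸ hdiff]
  -- sum the pieces
  have claim2 : ∀ n : ℕ,
      ∑ k ∈ Finset.range n, c / 2 ^ (k + 1) / ρ (c / 2 ^ k) ≤ ∫ s in t₀..T, β s := by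
    intro n
    have hterm : ∀ k : ℕ, c / 2 ^ (k + 1) / ρ (c / 2 ^ k) ≤ ∫ s in t k..t (k + 1), β s := by
      intro k
      have hρk : 0 < ρ (c / 2 ^ k) := hρpos _ (by positivity)
      rw [div_le_iff₀ hρk]
      calc c / 2 ^ (k + 1) ≤ ρ (c / 2 ^ k) * ∫ s in t k..t (k + 1), β s := claim1 k
        _ = (∫ s in t k..t (k + 1), β s) * ρ (c / 2 ^ k) := mul_comm _ _
    have hadj : ∑ k ∈ Finset.range n, (∫ s in t k..t (k + 1), β s)
        = ∫ s in (t 0)..(t n), β s := by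
      apply intervalIntegral.sum_integral_adjacent_intervals
      intro k _
      exact hβii _ _ (ht_lb k) (ht_succ k) (ht_mem (k + 1)).2
    have htail : (∫ s in (t 0)..(t n), β s) ≤ ∫ s in t₀..T, β s := by
      rw [ht0]
      have hsplit := intervalIntegral.integral_add_adjacent_intervals
        (hβii t₀ (t n) ht₀.1 (ht_mem n).1 (ht_mem n).2)
        (hβii (t n) T (ht_lb n) (ht_mem n).2 le_rfl)
      have hnn : 0 ≤ ∫ s in t n..T, β s :=
        intervalIntegral.integral_nonneg (ht_mem n).2 fun u hu =>
          hβnonneg u ⟨(ht_lb n).trans hu.1, hu.2⟩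
      linarith
    calc ∑ k ∈ Finset.range n, c / 2 ^ (k + 1) / ρ (c / 2 ^ k)
        ≤ ∑ k ∈ Finset.range n, ∫ s in t k..t (k + 1), β s :=
          Finset.sum_le_sum fun k _ => hterm k
      _ = ∫ s in (t 0)..(t n), β s := hadj
      _ ≤ ∫ s in t₀..T, β s := htail
  exact osgood_sum_bound ρ hρmono hρpos hρint c hc _ claim2
end

section
/- Let ρ : [0,∞) → [0,∞) be an Osgood modulus, let T > 0, C ≥ 0, B ≥ 0, let (ε_m)_{m≥1} be nonnegative reals with ε_m → 0, and for each m let X_m : [0,T] → [0,B] be measurable with X_m(t) ≤ ε_m + C·∫_t^T ρ(X_m(s)) ds for every t ∈ [0,T]. Then sup_{t∈[0,T]} X_m(t) → 0 as m → ∞. -/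
open MeasureTheory Set Filter

/-- Uniform convergence to zero for a sequence of functions satisfying
backward Bihari-type inequalities with vanishing initial errors. -/
theorem bihari_sequence_sup_tendsto_zero
    (ρ : ℝ → ℝ) (hρ : IsOsgoodModulus ρ)
    (T C B : ℝ) (hT : 0 < T) (hC : 0 ≤ C) (hB : 0 ≤ B)
    (ε : ℕ → ℝ) (hεnonneg : ∀ m, 0 ≤ ε m)
    (hε : Tendsto ε atTop (nhds 0))
    (X : ℕ → ℝ → ℝ) (hXmeas : ∀ m, Measurable (X m))
    (hXbdd : ∀ m, ∀ t ∈ Icc (0:ℝ) T, X m t ∈ Icc 0 B)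
    (hX : ∀ m, ∀ t ∈ Icc (0:ℝ) T, X m t ≤ ε m + C * ∫ s in t..T, ρ (X m s)) :
    Tendsto (fun m => ⨆ t : Icc (0:ℝ) T, X m t) atTop (nhds 0) := by
  obtain ⟨hcont, hmono, -, hρ0, hρpos, hdiv⟩ := hρ
  -- a continuous extension of ρ to all of ℝ
  set ρ' : ℝ → ℝ := fun u => ρ (max u 0) with hρ'def
  have hρ'cont : Continuous ρ' :=
    hcont.comp_continuous (continuous_id.max continuous_const) fun x => Set.mem_Ici.2 (le_max_right _ _)
  have hρ'mono : Monotone ρ' := fun u v huv =>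
    hmono (Set.mem_Ici.2 (le_max_right _ _)) (Set.mem_Ici.2 (le_max_right _ _)) (max_le_max huv le_rfl)
  have hρ'eq : ∀ u : ℝ, 0 ≤ u → ρ' u = ρ u := fun u hu => by
    simp [hρ'def, max_eq_left hu]
  have hρ'nonneg : ∀ u : ℝ, 0 ≤ ρ' u := fun u =>
    hρ0 ▸ hmono Set.self_mem_Ici (le_max_right u 0) (le_max_right u 0)
  have hρ'pos : ∀ u : ℝ, 0 < u → 0 < ρ' u := fun u hu => by
    rw [hρ'eq u hu.le]; exact hρpos u hu
  -- truncated integrand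
  set f : ℕ → ℝ → ℝ := fun m s => ρ' (min (X m s) B) with hfdef
  have hfeq : ∀ m, ∀ s ∈ Icc (0:ℝ) T, f m s = ρ (X m s) := by
    intro m s hs
    have h1 := hXbdd m s hs
    rw [hfdef]
    simp only [min_eq_left h1.2]
    exact hρ'eq _ h1.1
  have hfmeas : ∀ m, Measurable (f m) := fun m =>
    hρ'cont.measurable.comp ((hXmeas m).min measurable_const)
  have hfnonneg : ∀ m s, 0 ≤ f m s := fun m s => hρ'nonneg _
  have hfle : ∀ m s, f m s ≤ ρ B := fun m s => by
    have := hρ'mono (min_le_right (X m s) B)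
    rwa [hρ'eq B hB] at this
  have hfint : ∀ m a b, IntervalIntegrable (f m) volume a b := by
    intro m a b
    apply IntervalIntegrable.mono_fun' (g := fun _ => ρ B) intervalIntegrable_const
    · exact (hfmeas m).aestronglyMeasurable.restrict
    · exact Filter.Eventually.of_forall fun s => by
        show ‖f m s‖ ≤ ρ B
        rw [Real.norm_eq_abs, abs_of_nonneg (hfnonneg m s)]; exact hfle m s
  -- the dominating function h, in reversed time
  set ε' : ℕ → ℝ := fun m => ε m + ((m : ℝ) + 1)⁻¹ with hε'def
  have hε'pos : ∀ m, 0 < ε' m := fun m =>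
    add_pos_of_nonneg_of_pos (hεnonneg m) (by positivity)
  have hε'tendsto : Tendsto ε' atTop (nhds 0) := by
    have h2 : Tendsto (fun m : ℕ => ((m : ℝ) + 1)⁻¹) atTop (nhds 0) := by
      simpa [one_div] using tendsto_one_div_add_atTop_nhds_zero_nat (𝕜 := ℝ)
    simpa using hε.add h2
  set h : ℕ → ℝ → ℝ := fun m τ => ε' m + C * ∫ s in (T - τ)..T, f m s with hhdef
  have hh0 : ∀ m, h m 0 = ε' m := fun m => by simp [hhdef]
  have hhmono : ∀ m, Monotone (h m) := by
    intro m τ τ' hττ'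
    have hadd := intervalIntegral.integral_add_adjacent_intervals
      (hfint m (T - τ') (T - τ)) (hfint m (T - τ) T)
    have hpos : 0 ≤ ∫ s in (T - τ')..(T - τ), f m s :=
      intervalIntegral.integral_nonneg (by linarith) fun s _ => hfnonneg m s
    simp only [hhdef]
    have : (∫ s in (T - τ)..T, f m s) ≤ ∫ s in (T - τ')..T, f m s := by
      rw [← hadd]; linarith
    nlinarith
  have hhpos : ∀ m, ∀ τ, 0 ≤ τ → 0 < h m τ := by
    intro m τ hτ
    have h0 : 0 < h m 0 := by rw [hh0]; exact hε'pos m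
    exact lt_of_lt_of_le h0 (hhmono m hτ)
  have hhcont : ∀ m, Continuous (h m) := by
    intro m
    have hp : Continuous fun τ => ∫ s in T..(T - τ), f m s :=
      (intervalIntegral.continuous_primitive (fun a b => hfint m a b) T).comp
        (continuous_const.sub continuous_id)
    have : Continuous fun τ => ∫ s in (T - τ)..T, f m s := by
      have : (fun τ => ∫ s in (T - τ)..T, f m s) = fun τ => -∫ s in T..(T - τ), f m s := by
        funext τ; rw [intervalIntegral.integral_symm]
      rw [this]; exact hp.neg
    exact continuous_const.add (continuous_const.mul this)
  -- X is dominated by h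
  have hXh : ∀ m, ∀ s ∈ Icc (0:ℝ) T, X m s ≤ h m (T - s) := by
    intro m s hs
    have he : (∫ u in s..T, ρ (X m u)) = ∫ u in s..T, f m u := by
      apply intervalIntegral.integral_congr
      intro u hu
      rw [uIcc_of_le hs.2] at hu
      exact (hfeq m u ⟨le_trans hs.1 hu.1, hu.2⟩).symm
    have h1 := hX m s hs
    rw [he] at h1
    have h2 : h m (T - s) = ε' m + C * ∫ u in s..T, f m u := by
      simp [hhdef, sub_sub_cancel]
    rw [h2]
    have : ε m ≤ ε' m := le_add_of_nonneg_right (by positivity)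
    linarith
  have hfρh : ∀ m, ∀ s ∈ Icc (0:ℝ) T, f m s ≤ ρ' (h m (T - s)) := by
    intro m s hs
    rw [hfeq m s hs, ← hρ'eq _ (hXbdd m s hs).1]
    exact hρ'mono (hXh m s hs)
  -- slope estimate for h
  have hslope : ∀ m, ∀ τ τ' : ℝ, 0 ≤ τ → τ ≤ τ' → τ' ≤ T →
      h m τ' - h m τ ≤ C * (τ' - τ) * ρ' (h m τ') := by
    intro m τ τ' h0 hle hT'
    have hadd := intervalIntegral.integral_add_adjacent_intervals
      (hfint m (T - τ') (T - τ)) (hfint m (T - τ) T)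
    have hdiff : h m τ' - h m τ = C * ∫ s in (T - τ')..(T - τ), f m s := by
      simp only [hhdef]; rw [← hadd]; ring
    have hbound : (∫ s in (T - τ')..(T - τ), f m s) ≤ (τ' - τ) * ρ' (h m τ') := by
      have := intervalIntegral.integral_mono_on (by linarith : T - τ' ≤ T - τ)
        (hfint m (T - τ') (T - τ)) (intervalIntegrable_const (c := ρ' (h m τ')))
        (fun s hs => by
          have hs0 : s ∈ Icc (0:ℝ) T := ⟨by linarith [hs.1], by linarith [hs.2]⟩
          refine le_trans (hfρh m s hs0) (hρ'mono (hhmono m ?_))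
          linarith [hs.1])
      have heq : T - τ - (T - τ') = τ' - τ := by ring
      rwa [intervalIntegral.integral_const, smul_eq_mul, heq] at this
    calc h m τ' - h m τ = C * ∫ s in (T - τ')..(T - τ), f m s := hdiff
      _ ≤ C * ((τ' - τ) * ρ' (h m τ')) := mul_le_mul_of_nonneg_left hbound hC
      _ = C * (τ' - τ) * ρ' (h m τ') := by ring
  -- the Osgood primitive
  set Φ : ℝ → ℝ := fun u => ∫ v in (1:ℝ)..u, (ρ' v)⁻¹ with hΦdef
  have hinvcont : ContinuousOn (fun v => (ρ' v)⁻¹) (Ioi 0) := fun v hv =>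
    ((hρ'cont.continuousAt).inv₀ (ne_of_gt (hρ'pos v hv))).continuousWithinAt
  have hinvint : ∀ a b : ℝ, 0 < a → 0 < b →
      IntervalIntegrable (fun v => (ρ' v)⁻¹) volume a b := by
    intro a b ha hb
    apply ContinuousOn.intervalIntegrable
    apply hinvcont.mono
    intro v hv
    rcases hv with ⟨h1, -⟩
    exact lt_of_lt_of_le (lt_min ha hb) (by simpa using h1)
  have hinvnonneg : ∀ v : ℝ, 0 ≤ (ρ' v)⁻¹ := fun v => inv_nonneg.2 (hρ'nonneg v)
  have hΦderiv : ∀ u : ℝ, 0 < u → HasDerivAt Φ (ρ' u)⁻¹ u := by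
    intro u hu
    apply intervalIntegral.integral_hasDerivAt_right (hinvint 1 u one_pos hu)
    · exact ⟨Ioi 0, Ioi_mem_nhds hu,
        (hinvcont.mono subset_rfl).aemeasurable measurableSet_Ioi |>.aestronglyMeasurable⟩
    · exact (hρ'cont.continuousAt).inv₀ (ne_of_gt (hρ'pos u hu))
  have hΦdiff : ∀ u v : ℝ, 0 < u → 0 < v → Φ v - Φ u = ∫ w in u..v, (ρ' w)⁻¹ := by
    intro u v hu hv
    have := intervalIntegral.integral_add_adjacent_intervals
      (hinvint 1 u one_pos hu) (hinvint u v hu hv)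
    simp only [hΦdef]
    linarith
  have hΦmono : ∀ u v : ℝ, 0 < u → u ≤ v → Φ u ≤ Φ v := by
    intro u v hu huv
    have hnn : 0 ≤ ∫ w in u..v, (ρ' w)⁻¹ :=
      intervalIntegral.integral_nonneg huv fun w _ => hinvnonneg w
    have := hΦdiff u v hu (lt_of_lt_of_le hu huv)
    linarith
  have hΦslope : ∀ u v : ℝ, 0 < u → u ≤ v → Φ v - Φ u ≤ (v - u) * (ρ' u)⁻¹ := by
    intro u v hu huv
    rw [hΦdiff u v hu (lt_of_lt_of_le hu huv)]
    have := intervalIntegral.integral_mono_on huv (hinvint u v hu (lt_of_lt_of_le hu huv))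
      (intervalIntegrable_const (c := (ρ' u)⁻¹))
      (fun w hw => inv_anti₀ (hρ'pos u hu) (hρ'mono hw.1))
    rwa [intervalIntegral.integral_const, smul_eq_mul] at this
  -- main Bihari estimate
  have hmain : ∀ m, Φ (h m T) ≤ Φ (ε' m) + C * T := by
    intro m
    have key : ∀ x ∈ Icc (0:ℝ) T, Φ (h m x) ≤ Φ (ε' m) + C * x := by
      apply image_le_of_liminf_slope_right_le_deriv_boundary
        (f := fun τ => Φ (h m τ)) (B := fun τ => Φ (ε' m) + C * τ) (B' := fun _ => C)
      · intro τ hτ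
        exact (((hΦderiv _ (hhpos m τ hτ.1)).continuousAt.comp
          (hhcont m).continuousAt)).continuousWithinAt
      · rw [hh0 m, mul_zero, add_zero]
      · exact (continuous_const.add (continuous_const.mul continuous_id)).continuousOn
      · intro x _
        exact (((hasDerivAt_id x).const_mul C).const_add (Φ (ε' m))).hasDerivWithinAt.congr_deriv
          (by simp)
      · intro x hx r hr
        apply Filter.Eventually.frequently
        have hev1 : ∀ᶠ z in nhdsWithin x (Ioi x), z ∈ Ioc x T :=
          Ioc_mem_nhdsGT_of_mem ⟨le_refl x, hx.2⟩
        have hev2 : ∀ᶠ z in nhdsWithin x (Ioi x), C * ρ' (h m z) < r * ρ' (h m x) := by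
          have hc : Tendsto (fun z => C * ρ' (h m z)) (nhdsWithin x (Ioi x))
              (nhds (C * ρ' (h m x))) :=
            ((continuous_const.mul (hρ'cont.comp (hhcont m))).tendsto x).mono_left
              nhdsWithin_le_nhds
          exact hc.eventually_lt_const
            (by
              have hpos := hρ'pos _ (hhpos m x hx.1)
              nlinarith)
        filter_upwards [hev1, hev2, self_mem_nhdsWithin] with z hz1 hz2 (hz3 : z ∈ Ioi x)
        have hzx : x < z := hz3
        have hρhx := hρ'pos _ (hhpos m x hx.1)
        rw [slope_def_field]
        rw [div_lt_iff₀ (by linarith)]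
        have h1 : Φ (h m z) - Φ (h m x) ≤ (h m z - h m x) * (ρ' (h m x))⁻¹ :=
          hΦslope _ _ (hhpos m x hx.1) (hhmono m hzx.le)
        have h2 : h m z - h m x ≤ C * (z - x) * ρ' (h m z) :=
          hslope m x z hx.1 hzx.le hz1.2
        have h3 : (h m z - h m x) * (ρ' (h m x))⁻¹ ≤
            C * (z - x) * ρ' (h m z) * (ρ' (h m x))⁻¹ :=
          mul_le_mul_of_nonneg_right h2 (inv_nonneg.2 (hρ'nonneg _))
        have h4 : C * (z - x) * ρ' (h m z) * (ρ' (h m x))⁻¹ < r * (z - x) := by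
          rw [show C * (z - x) * ρ' (h m z) * (ρ' (h m x))⁻¹
              = (C * ρ' (h m z)) * (ρ' (h m x))⁻¹ * (z - x) by ring]
          have : (C * ρ' (h m z)) * (ρ' (h m x))⁻¹ < r := by
            rw [← div_eq_mul_inv, div_lt_iff₀ hρhx]
            exact hz2
          nlinarith
        linarith
    exact key T ⟨hT.le, le_refl T⟩
  -- divergence of the Osgood integral near 0
  have hdelta : ∀ M : ℝ, ∃ δ : ℝ, 0 < δ ∧ δ ≤ 1 ∧ M < ∫ v in δ..1, (ρ' v)⁻¹ := by
    intro M
    set g : ℝ → ENNReal := fun u => ENNReal.ofReal ((ρ' u)⁻¹) with hgdef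
    have hgmeas : Measurable g := ENNReal.measurable_ofReal.comp hρ'cont.measurable.inv
    have hIoc : ∫⁻ u in Ioc (0:ℝ) 1, g u = ⊤ := by
      rw [← hdiv]
      apply setLIntegral_congr_fun measurableSet_Ioc
      intro u hu
      rw [hgdef]
      simp only [one_div, hρ'eq u hu.1.le]
    have hsup : (⨆ n : ℕ, ∫⁻ u in Ioc (((n:ℝ)+1)⁻¹) 1, g u) = ⊤ := by
      have hind : ∀ n : ℕ, (∫⁻ u in Ioc (((n:ℝ)+1)⁻¹) 1, g u)
          = ∫⁻ u, (Ioc (((n:ℝ)+1)⁻¹) 1).indicator g u := fun n =>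
        (lintegral_indicator measurableSet_Ioc g).symm
      have hmon : Monotone fun n : ℕ => (Ioc (((n:ℝ)+1)⁻¹) 1).indicator g := by
        intro n n' hnn' u
        apply indicator_le_indicator_of_subset
        · apply Ioc_subset_Ioc_left
          apply inv_anti₀ (by positivity)
          have : (n:ℝ) ≤ (n':ℝ) := by exact_mod_cast hnn'
          linarith
        · intro v; exact zero_le
      have hlim : ∀ u, (⨆ n : ℕ, (Ioc (((n:ℝ)+1)⁻¹) 1).indicator g u)
          = (Ioc (0:ℝ) 1).indicator g u := by
        intro u
        by_cases hu : u ∈ Ioc (0:ℝ) 1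
        · rw [indicator_of_mem hu]
          apply le_antisymm
          · exact iSup_le fun n => indicator_le_self _ _ u
          · obtain ⟨n, hn⟩ := exists_nat_gt u⁻¹
            have hmem : u ∈ Ioc (((n:ℝ)+1)⁻¹) 1 := by
              constructor
              · have h1 : u⁻¹ < (n:ℝ) + 1 := hn.trans (lt_add_one _)
                have h2 : (0:ℝ) < (n:ℝ) + 1 := by positivity
                rw [inv_lt_comm₀ h2 hu.1]
                exact h1
              · exact hu.2
            exact le_trans (le_of_eq (indicator_of_mem hmem g).symm)
              (le_iSup (fun k : ℕ => (Ioc (((k:ℝ)+1)⁻¹) 1).indicator g u) n)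
        · rw [indicator_of_notMem hu]
          apply le_antisymm _ zero_le
          apply iSup_le
          intro n
          have : u ∉ Ioc (((n:ℝ)+1)⁻¹) 1 := fun hc => hu ⟨lt_trans (by positivity) hc.1, hc.2⟩
          rw [indicator_of_notMem this]
      calc (⨆ n : ℕ, ∫⁻ u in Ioc (((n:ℝ)+1)⁻¹) 1, g u)
          = ⨆ n : ℕ, ∫⁻ u, (Ioc (((n:ℝ)+1)⁻¹) 1).indicator g u := by simp_rw [hind]
        _ = ∫⁻ u, ⨆ n : ℕ, (Ioc (((n:ℝ)+1)⁻¹) 1).indicator g u :=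
            (lintegral_iSup (fun n => hgmeas.indicator measurableSet_Ioc) hmon).symm
        _ = ∫⁻ u, (Ioc (0:ℝ) 1).indicator g u := by simp_rw [hlim]
        _ = ∫⁻ u in Ioc (0:ℝ) 1, g u := lintegral_indicator measurableSet_Ioc g
        _ = ⊤ := hIoc
    obtain ⟨n, hn⟩ : ∃ n : ℕ, ENNReal.ofReal (max M 0 + 1)
        < ∫⁻ u in Ioc (((n:ℝ)+1)⁻¹) 1, g u := by
      by_contra hcon
      push_neg at hcon
      have hle := iSup_le hcon
      rw [hsup, top_le_iff] at hle
      exact ENNReal.ofReal_ne_top hle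
    set δ : ℝ := ((n:ℝ)+1)⁻¹ with hδdef
    have hδ0 : 0 < δ := by positivity
    have hδ1 : δ ≤ 1 := by
      rw [hδdef]
      apply inv_le_one_of_one_le₀
      have : (0:ℝ) ≤ (n:ℝ) := Nat.cast_nonneg n
      linarith
    have hint : IntegrableOn (fun v => (ρ' v)⁻¹) (Ioc δ 1) volume := (hinvint δ 1 hδ0 one_pos).1
    have heq : ENNReal.ofReal (∫ v in Ioc δ 1, (ρ' v)⁻¹) = ∫⁻ u in Ioc δ 1, g u :=
      MeasureTheory.ofReal_integral_eq_lintegral_ofReal hint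
        (ae_of_all _ fun v => hinvnonneg v)
    refine ⟨δ, hδ0, hδ1, ?_⟩
    rw [intervalIntegral.integral_of_le hδ1]
    rw [← heq] at hn
    have hlt : max M 0 + 1 < ∫ v in Ioc δ 1, (ρ' v)⁻¹ :=
      (ENNReal.ofReal_lt_ofReal_iff_of_nonneg (by positivity)).1 hn
    have := le_max_left M 0
    linarith
  -- Φ(ε' m) → -∞
  have hΦε : Tendsto (fun m => Φ (ε' m)) atTop atBot := by
    rw [tendsto_atBot]
    intro M
    obtain ⟨δ, hδ0, hδ1, hδM⟩ := hdelta (-M)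
    filter_upwards [hε'tendsto.eventually_lt_const hδ0] with m hm
    have hεm := hε'pos m
    have h1 : Φ (ε' m) = -∫ v in (ε' m)..1, (ρ' v)⁻¹ := by
      have := hΦdiff (ε' m) 1 hεm one_pos
      simp only [hΦdef] at this ⊢
      have h0 : (∫ v in (1:ℝ)..(1:ℝ), (ρ' v)⁻¹) = 0 := intervalIntegral.integral_same
      linarith
    have h2 : (∫ v in δ..1, (ρ' v)⁻¹) ≤ ∫ v in (ε' m)..1, (ρ' v)⁻¹ := by
      have hadd := intervalIntegral.integral_add_adjacent_intervals
        (hinvint (ε' m) δ hεm hδ0) (hinvint δ 1 hδ0 one_pos)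
      have hnn : 0 ≤ ∫ v in (ε' m)..δ, (ρ' v)⁻¹ :=
        intervalIntegral.integral_nonneg hm.le fun w _ => hinvnonneg w
      linarith
    linarith
  -- h m T → 0
  have hhT : Tendsto (fun m => h m T) atTop (nhds 0) := by
    rw [tendsto_order]
    constructor
    · intro a ha
      exact Filter.Eventually.of_forall fun m => lt_trans ha (hhpos m T hT.le)
    · intro a ha
      have : ∀ᶠ m in atTop, Φ (ε' m) < Φ a - C * T :=
        hΦε.eventually_lt_atBot (Φ a - C * T)
      filter_upwards [this] with m hm
      by_contra hcon
      push_neg at hcon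
      have := hΦmono a (h m T) ha hcon
      have := hmain m
      linarith
  -- conclude by squeezing
  have hub : ∀ m, (⨆ t : Icc (0:ℝ) T, X m t) ≤ h m T := by
    intro m
    have hne : Nonempty (Icc (0:ℝ) T) := ⟨⟨0, ⟨le_refl 0, hT.le⟩⟩⟩
    apply ciSup_le
    intro t
    calc X m t ≤ h m (T - t) := hXh m t t.2
      _ ≤ h m T := hhmono m (by linarith [t.2.1])
  have hlb : ∀ m, 0 ≤ ⨆ t : Icc (0:ℝ) T, X m t := by
    intro m
    have hbdd : BddAbove (range fun t : Icc (0:ℝ) T => X m t) := by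
      refine ⟨B, ?_⟩
      rintro _ ⟨t, rfl⟩
      exact (hXbdd m t t.2).2
    exact le_trans (hXbdd m 0 ⟨le_refl 0, hT.le⟩).1
      (le_ciSup hbdd ⟨0, ⟨le_refl 0, hT.le⟩⟩)
  exact tendsto_of_tendsto_of_tendsto_of_le_of_le tendsto_const_nhds hhT hlb hub
end
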